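/- Let 𝒜 = {a,b,c,d}. If x, y ∈ 𝒜⁺ are positive words such that x is obtained from y by a cyclic block interchange, then ν(x) − ν(y) ≤ 6. -/

import Mathlib

/-- `w` is a cyclic block interchange of `v`. -/
def IsCBI {A : Type*} (v w : List A) : Prop :=
  ∃ v' w' : List A, List.IsRotated v' v ∧ List.IsRotated w' w ∧
    ∃ w1 w2 w3 w4 : List A, v' = w1 ++ w2 ++ w3 ++ w4 ∧ w' = w1 ++ w4 ++ w3 ++ w2

/-- The four-letter alphabet `𝒜 = {a,b,c,d}`. -/
inductive Letter where
  | a | b | c | d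
deriving DecidableEq

open Letter

/-- `ν_{xy}(u)`: the number of occurrences of `xy` as a cyclic subword of `u`. -/
def nuPair (p q : Letter) (u : List Letter) : ℕ :=
  (List.range u.length).countP
    (fun i => decide (u[i]? = some p ∧ u[(i + 1) % u.length]? = some q))

/-- The function `ν = ν_{aa} + ν_{bc} + ν_{cd} + ν_{db} − ν_{ac} − ν_{cc} − ν_{dd} −
ν_{da} − ν_{bb}`. -/
def nu (u : List Letter) : ℤ :=
  (nuPair a a u : ℤ) + nuPair b c u + nuPair c d u + nuPair d b u
    - nuPair a c u - nuPair c c u - nuPair d d u - nuPair d a u - nuPair b b u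

instance : Fintype Letter :=
  ⟨⟨{Letter.a, Letter.b, Letter.c, Letter.d}, by decide⟩, by intro x; cases x <;> decide⟩

/-- The weight of a cyclic pair. -/
def f : Letter → Letter → ℤ
  | a, a => 1 | b, c => 1 | c, d => 1 | d, b => 1
  | a, c => -1 | c, c => -1 | d, d => -1 | d, a => -1 | b, b => -1
  | _, _ => 0

lemma key2 : ∀ p q e e' : Letter, (f e p - f e q) + (f e' q - f e' p) ≤ 3 := by decide

lemma key (e1 e2 e3 e4 s1 s2 s3 s4 : Letter) :
    f e1 s4 + f e4 s3 + f e3 s2 + f e2 s1 - f e1 s2 - f e2 s3 - f e3 s4 - f e4 s1 ≤ 6 := by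
  have h1 := key2 s4 s2 e1 e3
  have h2 := key2 s1 s3 e2 e4
  linarith

lemma f_le (p q : Letter) : f p q ≤ 1 := by cases p <;> cases q <;> decide
lemma f_ge (p q : Letter) : -1 ≤ f p q := by cases p <;> cases q <;> decide

/-- Sum of weights over (linear) adjacent pairs. -/
def L : List Letter → ℤ
  | [] => 0
  | [_] => 0
  | x :: y :: t => f x y + L (y :: t)

/-- Sum of weights over cyclic adjacent pairs. -/
def nuc : List Letter → ℤ
  | [] => 0
  | x :: t => L (x :: (t ++ [x]))

lemma L_glue : ∀ (u : List Letter) (y : Letter) (v : List Letter),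
    L (u ++ y :: v) = L (u ++ [y]) + L (y :: v)
  | [], y, v => by simp [L]
  | [z], y, v => by simp [L]
  | z :: w :: u, y, v => by
    have h := L_glue (w :: u) y v
    simp only [List.cons_append, L] at *
    rw [h]; ring

lemma L_snoc : ∀ (u : List Letter) (hne : u ≠ []) (p : Letter),
    L (u ++ [p]) = L u + f (u.getLast hne) p
  | [x], _, p => by simp [L]
  | x :: y :: s, hne, p => by
    have h := L_snoc (y :: s) (by simp) p
    simp only [List.cons_append, L] at *
    rw [h]; simp [List.getLast_cons]
    ring

lemma nuc_append (u v : List Letter) (hu : u ≠ []) (hv : v ≠ []) :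
    nuc (u ++ v) = L (u ++ [v.head hv]) + L (v ++ [u.head hu]) := by
  obtain ⟨h1, t1, rfl⟩ := List.exists_cons_of_ne_nil hu
  obtain ⟨h2, t2, rfl⟩ := List.exists_cons_of_ne_nil hv
  show L (h1 :: ((t1 ++ h2 :: t2) ++ [h1])) = _
  have e : h1 :: ((t1 ++ h2 :: t2) ++ [h1]) = (h1 :: t1) ++ h2 :: (t2 ++ [h1]) := by simp
  rw [e, L_glue]
  simp

lemma nuc_one (u : List Letter) (hu : u ≠ []) :
    nuc u = L (u ++ [u.head hu]) := by
  obtain ⟨h1, t1, rfl⟩ := List.exists_cons_of_ne_nil hu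
  simp [nuc]

/-- Splitting lemma: peel off the first block. -/
lemma L_split (u v : List Letter) (hv : v ≠ []) (p : Letter) :
    L (u ++ (v ++ [p])) = L (u ++ [v.head hv]) + L (v ++ [p]) := by
  obtain ⟨h2, t2, rfl⟩ := List.exists_cons_of_ne_nil hv
  have e : (h2 :: t2) ++ [p] = h2 :: (t2 ++ [p]) := by simp
  rw [e, L_glue]
  simp

lemma nuc2 (u v : List Letter) (hu : u ≠ []) (hv : v ≠ []) :
    nuc (u ++ v) = L u + L v
      + f (u.getLast hu) (v.head hv) + f (v.getLast hv) (u.head hu) := by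
  rw [nuc_append u v hu hv, L_snoc u hu, L_snoc v hv]
  ring

lemma nuc3 (u v w : List Letter) (hu : u ≠ []) (hv : v ≠ []) (hw : w ≠ []) :
    nuc (u ++ v ++ w) = L u + L v + L w
      + f (u.getLast hu) (v.head hv) + f (v.getLast hv) (w.head hw)
      + f (w.getLast hw) (u.head hu) := by
  have hvw : v ++ w ≠ [] := by simp [hv]
  have e1 : u ++ v ++ w = u ++ (v ++ w) := by simp
  rw [e1, nuc_append u (v ++ w) hu hvw]
  have e2 : (v ++ w) ++ [u.head hu] = v ++ (w ++ [u.head hu]) := by simp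
  rw [e2, L_split v w hw (u.head hu)]
  rw [List.head_append_of_ne_nil hv]
  rw [L_snoc u hu, L_snoc v hv, L_snoc w hw]
  ring

lemma nuc4 (u v w z : List Letter) (hu : u ≠ []) (hv : v ≠ []) (hw : w ≠ []) (hz : z ≠ []) :
    nuc (u ++ v ++ w ++ z) = L u + L v + L w + L z
      + f (u.getLast hu) (v.head hv) + f (v.getLast hv) (w.head hw)
      + f (w.getLast hw) (z.head hz) + f (z.getLast hz) (u.head hu) := by
  have hvwz : v ++ w ++ z ≠ [] := by simp [hv]
  have e1 : u ++ v ++ w ++ z = u ++ (v ++ w ++ z) := by simp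
  rw [e1, nuc_append u (v ++ w ++ z) hu hvwz]
  have hwz : w ++ z ≠ [] := by simp [hw]
  have e2 : (v ++ w ++ z) ++ [u.head hu] = v ++ ((w ++ z) ++ [u.head hu]) := by simp
  rw [e2, L_split v (w ++ z) hwz (u.head hu)]
  have e3 : (w ++ z) ++ [u.head hu] = w ++ (z ++ [u.head hu]) := by simp
  rw [e3, L_split w z hz (u.head hu)]
  have e4 : (v ++ w ++ z).head hvwz = v.head hv := by
    obtain ⟨p, v2, rfl⟩ := List.exists_cons_of_ne_nil hv
    simp
  have e5 : (w ++ z).head hwz = w.head hw := by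
    obtain ⟨p, w2, rfl⟩ := List.exists_cons_of_ne_nil hw
    simp
  rw [e4, e5, L_snoc u hu, L_snoc v hv, L_snoc w hw, L_snoc z hz]
  ring

/-! Rotation invariance of `nuc`. -/

lemma nuc_rotate_one (x : Letter) (t : List Letter) : nuc (x :: t) = nuc (t ++ [x]) := by
  cases t with
  | nil => rfl
  | cons y t' =>
    rw [nuc2 (y :: t') [x] (by simp) (by simp)]
    show L ([x] ++ (y :: (t' ++ [x]))) = _
    rw [L_glue [x] y (t' ++ [x]),
      show y :: (t' ++ [x]) = (y :: t') ++ [x] from rfl,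
      L_snoc (y :: t') (by simp) x]
    simp [L]
    ring

lemma nuc_rotate : ∀ (n : ℕ) (l : List Letter), nuc (l.rotate n) = nuc l := by
  intro n
  induction n with
  | zero => intro l; simp
  | succ n ih =>
    intro l
    cases l with
    | nil => simp
    | cons x t =>
      rw [List.rotate_cons_succ, ih, ← nuc_rotate_one]

lemma nuc_isRotated {l l' : List Letter} (h : List.IsRotated l l') : nuc l = nuc l' := by
  obtain ⟨n, rfl⟩ := h
  rw [nuc_rotate]

/-! Bridge: `nu = nuc`. -/

lemma countP_range (n : ℕ) (p : ℕ → Bool) :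
    ((List.range n).countP p : ℤ) = ∑ i ∈ Finset.range n, (if p i then (1 : ℤ) else 0) := by
  induction n with
  | zero => simp
  | succ n ih =>
    rw [List.range_succ, List.countP_append, Finset.sum_range_succ]
    push_cast
    rw [ih]
    simp [List.countP_cons]

lemma L_sum : ∀ v : List Letter,
    L v = ∑ i ∈ Finset.range (v.length - 1), f (v.getD i a) (v.getD (i + 1) a)
  | [] => by simp [L]
  | [x] => by simp [L]
  | x :: y :: t => by
    have ih := L_sum (y :: t)
    simp only [L, List.length_cons]
    rw [show t.length + 1 + 1 - 1 = t.length + 1 from rfl, Finset.sum_range_succ']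
    simp only [List.getD_cons_succ, List.getD_cons_zero]
    rw [ih]
    simp only [List.length_cons, Nat.add_sub_cancel, List.getD_cons_succ]
    ring

lemma nu_eq_sum (u : List Letter) :
    nu u = ∑ i ∈ Finset.range u.length,
      f (u.getD i a) (u.getD ((i + 1) % u.length) a) := by
  unfold nu nuPair
  rw [countP_range, countP_range, countP_range, countP_range, countP_range,
    countP_range, countP_range, countP_range, countP_range]
  rw [← Finset.sum_add_distrib, ← Finset.sum_add_distrib, ← Finset.sum_add_distrib,
    ← Finset.sum_sub_distrib, ← Finset.sum_sub_distrib, ← Finset.sum_sub_distrib,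
    ← Finset.sum_sub_distrib, ← Finset.sum_sub_distrib]
  apply Finset.sum_congr rfl
  intro i hi
  rw [Finset.mem_range] at hi
  have hj : (i + 1) % u.length < u.length := Nat.mod_lt _ (by omega)
  have hP : u[i]? = some (u.getD i a) := by
    rw [List.getElem?_eq_getElem hi, List.getD_eq_getElem _ _ hi]
  have hQ : u[(i + 1) % u.length]? = some (u.getD ((i + 1) % u.length) a) := by
    rw [List.getElem?_eq_getElem hj, List.getD_eq_getElem _ _ hj]
  rw [hP, hQ]
  generalize u.getD i a = P
  generalize u.getD ((i + 1) % u.length) a = Q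
  cases P <;> cases Q <;> simp [f]

lemma sum_eq_nuc (u : List Letter) :
    (∑ i ∈ Finset.range u.length,
      f (u.getD i a) (u.getD ((i + 1) % u.length) a)) = nuc u := by
  cases u with
  | nil => simp [nuc]
  | cons x t =>
    show _ = L (x :: (t ++ [x]))
    rw [L_sum]
    have hv : x :: (t ++ [x]) = (x :: t) ++ [x] := rfl
    have hlen2 : (x :: (t ++ [x])).length - 1 = (x :: t).length := by simp
    apply Finset.sum_congr (by rw [hlen2])
    intro i hi
    rw [Finset.mem_range, hlen2, List.length_cons] at hi
    have hlen : (x :: t).length = t.length + 1 := by simp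
    congr 1
    · rw [hv, List.getD_append _ _ _ _ (by simpa using hi)]
    · rcases Nat.lt_or_ge (i + 1) (t.length + 1) with h1 | h1
      · rw [hlen, Nat.mod_eq_of_lt h1, hv, List.getD_append _ _ _ _ (by simpa using h1)]
      · have hi1 : i + 1 = t.length + 1 := by omega
        rw [hlen, hi1, Nat.mod_self, hv, List.getD_append_right _ _ _ _ (by simp)]
        simp

lemma nu_eq_nuc (u : List Letter) : nu u = nuc u :=
  (nu_eq_sum u).trans (sum_eq_nuc u)

/-! Bounds. -/

lemma nuc1_le (u : List Letter) (hu : u ≠ []) : nuc u ≤ L u + 1 := by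
  rw [nuc_one u hu, L_snoc u hu]
  linarith [f_le (u.getLast hu) (u.head hu)]

lemma nuc1_ge (u : List Letter) (hu : u ≠ []) : L u - 1 ≤ nuc u := by
  rw [nuc_one u hu, L_snoc u hu]
  linarith [f_ge (u.getLast hu) (u.head hu)]

lemma nuc2_le (u v : List Letter) (hu : u ≠ []) (hv : v ≠ []) :
    nuc (u ++ v) ≤ L u + L v + 2 := by
  rw [nuc2 u v hu hv]
  linarith [f_le (u.getLast hu) (v.head hv), f_le (v.getLast hv) (u.head hu)]

lemma nuc2_ge (u v : List Letter) (hu : u ≠ []) (hv : v ≠ []) :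
    L u + L v - 2 ≤ nuc (u ++ v) := by
  rw [nuc2 u v hu hv]
  linarith [f_ge (u.getLast hu) (v.head hv), f_ge (v.getLast hv) (u.head hu)]

lemma nuc3_le (u v w : List Letter) (hu : u ≠ []) (hv : v ≠ []) (hw : w ≠ []) :
    nuc (u ++ v ++ w) ≤ L u + L v + L w + 3 := by
  rw [nuc3 u v w hu hv hw]
  linarith [f_le (u.getLast hu) (v.head hv), f_le (v.getLast hv) (w.head hw),
    f_le (w.getLast hw) (u.head hu)]

lemma nuc3_ge (u v w : List Letter) (hu : u ≠ []) (hv : v ≠ []) (hw : w ≠ []) :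
    L u + L v + L w - 3 ≤ nuc (u ++ v ++ w) := by
  rw [nuc3 u v w hu hv hw]
  linarith [f_ge (u.getLast hu) (v.head hv), f_ge (v.getLast hv) (w.head hw),
    f_ge (w.getLast hw) (u.head hu)]

/-! Main case lemmas. -/

lemma main4 (u v w z : List Letter) (hu : u ≠ []) (hv : v ≠ []) (hw : w ≠ []) (hz : z ≠ []) :
    nuc (u ++ z ++ w ++ v) - nuc (u ++ v ++ w ++ z) ≤ 6 := by
  rw [nuc4 u z w v hu hz hw hv, nuc4 u v w z hu hv hw hz]
  have := key (u.getLast hu) (v.getLast hv) (w.getLast hw) (z.getLast hz)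
    (u.head hu) (v.head hv) (w.head hw) (z.head hz)
  linarith

lemma main3a (u v w : List Letter) (hu : u ≠ []) (hv : v ≠ []) (hw : w ≠ []) :
    nuc (u ++ w ++ v) - nuc (u ++ v ++ w) ≤ 6 := by
  have h1 := nuc3_le u w v hu hw hv
  have h2 := nuc3_ge u v w hu hv hw
  linarith

lemma main3b (u v w : List Letter) (hu : u ≠ []) (hv : v ≠ []) (hw : w ≠ []) :
    nuc (w ++ v ++ u) - nuc (u ++ v ++ w) ≤ 6 := by
  have h1 := nuc3_le w v u hw hv hu
  have h2 := nuc3_ge u v w hu hv hw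
  linarith

lemma main2 (u v : List Letter) (hu : u ≠ []) (hv : v ≠ []) :
    nuc (v ++ u) - nuc (u ++ v) ≤ 6 := by
  have h1 := nuc2_le v u hv hu
  have h2 := nuc2_ge u v hu hv
  linarith

/-- If `x` is obtained from `y` by a cyclic block interchange, then
`ν(x) − ν(y) ≤ 6`. -/
theorem nu_cbi_le_six (x y : List Letter) (h : IsCBI y x) :
    nu x - nu y ≤ 6 := by
  obtain ⟨v', w', hv, hw, w1, w2, w3, w4, rfl, rfl⟩ := h
  rw [nu_eq_nuc, nu_eq_nuc, ← nuc_isRotated hv, ← nuc_isRotated hw]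
  rcases w1 with _ | ⟨p1, t1⟩ <;> rcases w2 with _ | ⟨p2, t2⟩ <;>
    rcases w3 with _ | ⟨p3, t3⟩ <;> rcases w4 with _ | ⟨p4, t4⟩ <;>
    try simp only [List.nil_append, List.append_nil]
  · norm_num
  · norm_num
  · norm_num
  · exact main2 (p3 :: t3) (p4 :: t4) (List.cons_ne_nil _ _) (List.cons_ne_nil _ _)
  · norm_num
  · exact main2 (p2 :: t2) (p4 :: t4) (List.cons_ne_nil _ _) (List.cons_ne_nil _ _)
  · exact main2 (p2 :: t2) (p3 :: t3) (List.cons_ne_nil _ _) (List.cons_ne_nil _ _)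
  · exact main3b (p2 :: t2) (p3 :: t3) (p4 :: t4) (List.cons_ne_nil _ _) (List.cons_ne_nil _ _) (List.cons_ne_nil _ _)
  · norm_num
  · norm_num
  · norm_num
  · exact main3a (p1 :: t1) (p3 :: t3) (p4 :: t4) (List.cons_ne_nil _ _) (List.cons_ne_nil _ _) (List.cons_ne_nil _ _)
  · norm_num
  · exact main3a (p1 :: t1) (p2 :: t2) (p4 :: t4) (List.cons_ne_nil _ _) (List.cons_ne_nil _ _) (List.cons_ne_nil _ _)
  · exact main3a (p1 :: t1) (p2 :: t2) (p3 :: t3) (List.cons_ne_nil _ _) (List.cons_ne_nil _ _) (List.cons_ne_nil _ _)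
  · exact main4 (p1 :: t1) (p2 :: t2) (p3 :: t3) (p4 :: t4) (List.cons_ne_nil _ _) (List.cons_ne_nil _ _) (List.cons_ne_nil _ _) (List.cons_ne_nil _ _)
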